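/- Let 0 < α < 1/2 and β > 0, and let f be the probability density function of the power Lindley distribution PL(α, β). Define h₁(x) = (x^{1−α}/(1+x^α)) e^{−β x^α} sin(2β x^α tan(πα)) for x > 0 and h₁(x) = 0 for x ≤ 0. Then ∫_0^∞ x^k f(x) h₁(x) dx = 0 for every nonnegative integer k. -/

import Mathlib

open Real MeasureTheory

open Set Filter Complex Metric Topology

lemma integrableOn_rpow_mul_exp_neg_mul {s d : ℝ} (hs : -1 < s) (hd : 0 < d) :
    IntegrableOn (fun t : ℝ => t ^ s * Real.exp (-d * t)) (Ioi 0) := by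
  have := integrableOn_rpow_mul_exp_neg_mul_rpow hs zero_lt_one hd
  exact this.congr_fun (fun t ht => by simp only [Real.rpow_one]) measurableSet_Ioi

lemma aesm_aux (w b : ℂ) :
    AEStronglyMeasurable (fun t : ℝ => (t : ℂ) ^ w * Complex.exp (-b * t))
      (volume.restrict (Ioi 0)) := by
  apply ContinuousOn.aestronglyMeasurable _ measurableSet_Ioi
  intro t ht
  apply ContinuousWithinAt.mul
  · exact (continuousAt_ofReal_cpow_const t w (Or.inr (ne_of_gt ht))).continuousWithinAt
  · exact (Complex.continuous_exp.comp
      ((continuous_const.mul Complex.continuous_ofReal))).continuousWithinAt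

lemma norm_aux {t : ℝ} (ht : 0 < t) (s : ℝ) (b : ℂ) :
    ‖(t : ℂ) ^ ((s : ℂ) - 1) * Complex.exp (-b * t)‖ = t ^ (s - 1) * Real.exp (-b.re * t) := by
  rw [norm_mul, Complex.norm_exp,
    Complex.norm_cpow_eq_rpow_re_of_pos ht]
  norm_num

lemma integrable_aux {s : ℝ} (hs : 0 < s) {b : ℂ} (hb : 0 < b.re) :
    IntegrableOn (fun t : ℝ => (t : ℂ) ^ ((s : ℂ) - 1) * Complex.exp (-b * t)) (Ioi 0) := by
  refine ((integrableOn_rpow_mul_exp_neg_mul (s := s - 1) (by linarith) hb).mono'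
    (aesm_aux _ _) ?_)
  filter_upwards [ae_restrict_mem measurableSet_Ioi] with t ht
  rw [norm_aux ht]

lemma key {s : ℝ} (hs : 0 < s) {b : ℂ} (hb : 0 < b.re) :
    ∫ t in Ioi (0:ℝ), (t : ℂ) ^ ((s : ℂ) - 1) * Complex.exp (-b * t)
      = Complex.Gamma s * b ^ (-(s : ℂ)) := by
  set U : Set ℂ := {z : ℂ | 0 < z.re} with hU
  have hUopen : IsOpen U := isOpen_lt continuous_const continuous_re
  set F : ℂ → ℂ := fun z => ∫ t in Ioi (0:ℝ), (t : ℂ) ^ ((s : ℂ) - 1) * Complex.exp (-z * t)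
    with hF
  set G : ℂ → ℂ := fun z => Complex.Gamma s * z ^ (-(s : ℂ)) with hG
  -- F is differentiable on U
  have hFdiff : DifferentiableOn ℂ F U := by
    intro z₀ hz₀
    have hz₀re : 0 < z₀.re := hz₀
    set d : ℝ := z₀.re / 2 with hd
    have hdpos : 0 < d := by positivity
    have key := hasDerivAt_integral_of_dominated_loc_of_deriv_le (μ := volume.restrict (Ioi 0))
      (F := fun z t => (t : ℂ) ^ ((s : ℂ) - 1) * Complex.exp (-z * t))
      (F' := fun z t => (t : ℂ) ^ ((s : ℂ) - 1) * (-t * Complex.exp (-z * t)))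
      (bound := fun t : ℝ => t ^ s * Real.exp (-d * t))
      (x₀ := z₀) (s := ball z₀ d) (ball_mem_nhds z₀ hdpos)
      (Eventually.of_forall fun z => aesm_aux _ _)
      (integrable_aux hs hz₀re)
      ?_ ?_ (integrableOn_rpow_mul_exp_neg_mul (by linarith) hdpos) ?_
    · exact (key.2.differentiableAt).differentiableWithinAt
    · -- measurability of F' z₀
      have : AEStronglyMeasurable (fun t : ℝ => (-t : ℂ))
          (volume.restrict (Ioi 0)) :=
        (continuous_ofReal.neg).aestronglyMeasurable.restrict
      exact ((aesm_aux ((s:ℂ)-1) z₀).mul this).congr (by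
        filter_upwards with t
        simp only [Pi.mul_apply]; ring)
    · -- bound
      filter_upwards [ae_restrict_mem measurableSet_Ioi] with t ht z hz
      simp only [mem_Ioi] at ht
      have h1 : d < z.re := by
        have := abs_lt.1 (lt_of_le_of_lt (abs_re_le_norm (z - z₀)) (mem_ball_iff_norm.1 hz))
        simp only [sub_re] at this
        linarith [this.1]
      have habs : ‖(t : ℂ) ^ ((s : ℂ) - 1) * (-t * Complex.exp (-z * t))‖
          = t ^ (s - 1) * (t * Real.exp (-z.re * t)) := by
        rw [show (t : ℂ) ^ ((s : ℂ) - 1) * (-(t : ℂ) * Complex.exp (-z * t))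
            = (-t : ℂ) * ((t : ℂ) ^ ((s : ℂ) - 1) * Complex.exp (-z * t)) by ring,
          norm_mul, norm_aux ht, norm_neg]
        simp [abs_of_pos ht]
        ring
      rw [habs]
      have h2 : Real.exp (-z.re * t) ≤ Real.exp (-d * t) := by
        apply Real.exp_le_exp.2; nlinarith
      have h3 : (0:ℝ) ≤ t ^ (s - 1) := Real.rpow_nonneg ht.le _
      have hle : t ^ (s - 1) * (t * Real.exp (-z.re * t)) ≤ t ^ (s - 1) * (t * Real.exp (-d * t)) :=
        mul_le_mul_of_nonneg_left (mul_le_mul_of_nonneg_left h2 ht.le) h3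
      refine hle.trans (le_of_eq ?_)
      rw [show t ^ (s - 1) * (t * Real.exp (-d * t)) = t ^ (s - 1) * t * Real.exp (-d * t) from by
        ring, ← Real.rpow_add_one ht.ne' (s - 1), sub_add_cancel]
    · -- differentiability
      filter_upwards with t z hz
      have h1 : HasDerivAt (fun z : ℂ => -z * (t : ℂ)) (-t : ℂ) z := by
        simpa using ((hasDerivAt_id z).neg.mul_const (t : ℂ))
      have h2 : HasDerivAt (fun z : ℂ => Complex.exp (-z * t))
          (-t * Complex.exp (-z * t)) z := by
        simpa [mul_comm] using h1.cexp
      simpa [mul_comm, mul_left_comm] using h2.const_mul ((t : ℂ) ^ ((s : ℂ) - 1))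
  -- G differentiable on U
  have hGdiff : DifferentiableOn ℂ G U := by
    intro z hz
    have hz' : z ∈ Complex.slitPlane := Or.inl hz
    refine DifferentiableAt.differentiableWithinAt ?_
    exact ((differentiableAt_id.cpow (differentiableAt_const _) hz')).const_mul _
  -- equality on real points
  have hreal : ∀ r : ℝ, 0 < r → F r = G r := by
    intro r hr
    have h1 := Complex.integral_cpow_mul_exp_neg_mul_Ioi
      (a := (s : ℂ)) (r := r) (by simpa using hs) hr
    have h2 : F r = (1 / (r : ℂ)) ^ (s : ℂ) * Complex.Gamma s := by
      rw [hF, ← h1]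
      refine setIntegral_congr_fun measurableSet_Ioi (fun t ht => ?_)
      push_cast
      ring_nf
    rw [h2, hG]
    have hrne : (r : ℂ) ≠ 0 := Complex.ofReal_ne_zero.mpr hr.ne'
    have : (1 / (r : ℂ)) ^ (s : ℂ) = (r : ℂ) ^ (-(s : ℂ)) := by
      rw [Complex.cpow_neg, one_div, Complex.inv_cpow]
      rw [Complex.arg_ofReal_of_nonneg hr.le]
      exact Real.pi_ne_zero.symm
    rw [this, mul_comm]
  -- identity theorem
  have hprec : IsPreconnected U := (convex_halfSpace_re_gt 0).isPreconnected
  have h1U : (1 : ℂ) ∈ U := by simp [hU]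
  have hfreq : ∃ᶠ z in nhdsWithin (1 : ℂ) {(1 : ℂ)}ᶜ, F z = G z := by
    have hre : Tendsto (fun n : ℕ => (1 + ((n : ℝ) + 1)⁻¹ : ℝ)) atTop (𝓝 1) := by
      have := tendsto_one_div_add_atTop_nhds_zero_nat (𝕜 := ℝ)
      simp only [one_div] at this
      simpa using tendsto_const_nhds.add this
    have hseq : Tendsto (fun n : ℕ => ((1 + ((n : ℝ) + 1)⁻¹ : ℝ) : ℂ)) atTop
        (nhdsWithin (1 : ℂ) {(1 : ℂ)}ᶜ) := by
      rw [tendsto_nhdsWithin_iff]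
      constructor
      · have h2 := (Complex.continuous_ofReal.tendsto 1).comp hre
        rw [Complex.ofReal_one] at h2
        exact h2
      · filter_upwards with n
        simp only [mem_compl_iff, mem_singleton_iff]
        intro h
        have : (1 + ((n : ℝ) + 1)⁻¹ : ℝ) = 1 := by exact_mod_cast h
        nlinarith [inv_pos.mpr (by positivity : (0:ℝ) < (n : ℝ) + 1)]
    exact hseq.frequently (Frequently.of_forall fun n => hreal _ (by positivity))
  have heq := (hFdiff.analyticOnNhd hUopen).eqOn_of_preconnected_of_frequently_eq
    (hGdiff.analyticOnNhd hUopen) hprec h1U hfreq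
  exact heq hb

lemma gamma_cpow_im_zero {α β : ℝ} (hα0 : 0 < α) (hα : α < 1 / 2) (hβ : 0 < β) (k : ℕ) :
    (Complex.Gamma ((((k : ℝ) + 1) / α : ℝ) : ℂ) *
      (((2 * β : ℝ) : ℂ) - ((2 * β * Real.tan (π * α) : ℝ) : ℂ) * I) ^
        (-(((((k : ℝ) + 1) / α : ℝ)) : ℂ))).im = 0 := by
  have hθ1 : 0 < π * α := by positivity
  have hθ2 : π * α < π / 2 := by nlinarith [Real.pi_pos]
  have hcos : 0 < Real.cos (π * α) :=
    Real.cos_pos_of_mem_Ioo ⟨by linarith [Real.pi_pos], hθ2⟩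
  set b : ℂ := ((2 * β : ℝ) : ℂ) - ((2 * β * Real.tan (π * α) : ℝ) : ℂ) * I with hb_def
  set r : ℝ := 2 * β / Real.cos (π * α) with hr_def
  have hr : 0 < r := by positivity
  have hbeq : b = (r : ℂ) * Complex.exp ((↑(-(π * α)) : ℂ) * I) := by
    rw [Complex.exp_mul_I, ← Complex.ofReal_cos, ← Complex.ofReal_sin,
      Real.cos_neg, Real.sin_neg]
    apply Complex.ext
    · simp only [hb_def, sub_re, ofReal_re, mul_re, mul_im, ofReal_im, I_re, I_im,
        add_re, add_im, mul_zero, mul_one, zero_mul, sub_zero, zero_sub, neg_zero, add_zero,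
        zero_add, hr_def]
      field_simp
    · simp only [hb_def, sub_im, ofReal_re, mul_re, mul_im, ofReal_im, I_re, I_im,
        add_re, add_im, mul_zero, mul_one, zero_mul, sub_zero, zero_sub, neg_zero, add_zero,
        zero_add, hr_def]
      rw [Real.tan_eq_sin_div_cos]
      field_simp
  set s : ℝ := ((k : ℝ) + 1) / α with hs_def
  have hs : 0 < s := by positivity
  have harg : b.arg = -(π * α) := by
    rw [hbeq, Complex.arg_real_mul _ hr, Complex.exp_mul_I]
    exact Complex.arg_cos_add_sin_mul_I ⟨by linarith [Real.pi_pos], by linarith [Real.pi_pos]⟩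
  have hbre : b.re = 2 * β := by
    simp only [hb_def, Complex.sub_re, Complex.ofReal_re, Complex.mul_re, Complex.ofReal_im,
      Complex.I_re, Complex.I_im, mul_zero, zero_mul, mul_one, sub_zero, zero_sub, neg_zero]
  have hbne : b ≠ 0 := by
    intro h
    rw [h, Complex.zero_re] at hbre
    linarith
  have hgoal : (Complex.Gamma (s : ℂ) * b ^ (-(s : ℂ))).im = 0 := by
    rw [Complex.cpow_def_of_ne_zero hbne, Complex.Gamma_ofReal]
    have him : (Complex.log b * -(s : ℂ)).im = π * α * s := by
      simp only [Complex.mul_im, Complex.log_im, harg, Complex.neg_im, Complex.neg_re,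
        Complex.ofReal_im, Complex.ofReal_re, neg_zero, mul_zero, zero_add, add_zero,
        mul_neg, neg_mul, neg_neg]
    have hsin : Real.sin ((Complex.log b * -(s : ℂ)).im) = 0 := by
      rw [him, show π * α * s = ((k + 1 : ℕ) : ℝ) * π by
        rw [hs_def]; push_cast; field_simp]
      exact Real.sin_nat_mul_pi (k + 1)
    rw [Complex.mul_im]
    simp only [Complex.ofReal_re, Complex.ofReal_im, zero_mul, add_zero]
    rw [Complex.exp_im, hsin, mul_zero, mul_zero]
  exact hgoal

/-- For `0 < α < 1/2` and `β > 0`, the function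
`h₁(x) = (x^{1-α}/(1+x^α)) e^{-β x^α} sin(2β x^α tan(πα))` (for `x > 0`, zero otherwise)
has vanishing moments against the power Lindley density `f`:
`∫_0^∞ x^k f(x) h₁(x) dx = 0` for every nonnegative integer `k`. -/
theorem power_lindley_perturbation_one (α β : ℝ) (hα0 : 0 < α) (hα : α < 1 / 2)
    (hβ : 0 < β)
    (f h₁ : ℝ → ℝ)
    (hf : ∀ x : ℝ, f x = if 0 < x then
      (α * β ^ 2 / (β + 1)) * (1 + x ^ α) * x ^ (α - 1) * Real.exp (-β * x ^ α) else 0)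
    (hh : ∀ x : ℝ, h₁ x = if 0 < x then
      x ^ (1 - α) / (1 + x ^ α) * Real.exp (-β * x ^ α) *
        Real.sin (2 * β * x ^ α * Real.tan (π * α)) else 0) :
    ∀ k : ℕ, ∫ x in Set.Ioi (0 : ℝ), x ^ k * f x * h₁ x = 0 := by
  intro k
  set C : ℝ := α * β ^ 2 / (β + 1) with hC_def
  set c : ℝ := 2 * β * Real.tan (π * α) with hc_def
  set s : ℝ := ((k : ℝ) + 1) / α with hs_def
  set b : ℂ := ((2 * β : ℝ) : ℂ) - ((c : ℝ) : ℂ) * I with hb_def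
  have hbre : 0 < b.re := by simp [hb_def]; positivity
  have hs : 0 < s := by positivity
  have hαs : α * s = (k : ℝ) + 1 := by rw [hs_def]; field_simp
  set g : ℝ → ℝ := fun t => (C / α) * (t ^ (s - 1) * Real.exp (-(2 * β) * t) *
    Real.sin (c * t)) with hg_def
  -- step 1: rewrite integrand via substitution form
  have step1 : ∫ x in Ioi (0 : ℝ), x ^ k * f x * h₁ x
      = ∫ x in Ioi (0 : ℝ), (|α| * x ^ (α - 1)) • g (x ^ α) := by
    refine setIntegral_congr_fun measurableSet_Ioi (fun x hx => ?_)
    rw [mem_Ioi] at hx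
    have hxα : (0 : ℝ) < x ^ α := Real.rpow_pos_of_pos hx α
    have hne : (1 : ℝ) + x ^ α ≠ 0 := by positivity
    have h1 : x ^ (α - 1) * x ^ (1 - α) = 1 := by
      rw [← Real.rpow_add hx]; norm_num
    have h2 : (x ^ α) ^ (s - 1) = x ^ ((k : ℝ) + 1 - α) := by
      rw [← Real.rpow_mul hx.le]
      congr 1
      rw [mul_sub, hαs, mul_one]
    have h3 : x ^ (α - 1) * x ^ ((k : ℝ) + 1 - α) = x ^ k := by
      rw [← Real.rpow_add hx, show α - 1 + ((k : ℝ) + 1 - α) = (k : ℝ) by ring,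
        Real.rpow_natCast]
    have he : Real.exp (-(2 * β) * x ^ α)
        = Real.exp (-β * x ^ α) * Real.exp (-β * x ^ α) := by
      rw [← Real.exp_add]; ring_nf
    rw [hf x, hh x, if_pos hx, if_pos hx, smul_eq_mul, hg_def]
    simp only []
    rw [h2, he, abs_of_pos hα0]
    have hSarg : c * x ^ α = 2 * β * x ^ α * Real.tan (π * α) := by rw [hc_def]; ring
    rw [hSarg]
    set E := Real.exp (-β * x ^ α)
    set S := Real.sin (2 * β * x ^ α * Real.tan (π * α))
    calc x ^ k * (C * (1 + x ^ α) * x ^ (α - 1) * E) * (x ^ (1 - α) / (1 + x ^ α) * E * S)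
        = C * x ^ k * (E * E) * S * ((x ^ (α - 1) * x ^ (1 - α)) * ((1 + x ^ α) / (1 + x ^ α)))
          := by ring
      _ = C * x ^ k * (E * E) * S := by rw [h1, div_self hne]; ring
      _ = α * x ^ (α - 1) * (C / α * (x ^ ((k : ℝ) + 1 - α) * (E * E) * S)) := by
          rw [show α * x ^ (α - 1) * (C / α * (x ^ ((k : ℝ) + 1 - α) * (E * E) * S))
            = (α / α) * (x ^ (α - 1) * x ^ ((k : ℝ) + 1 - α)) * (C * (E * E) * S) by ring,
            div_self hα0.ne', h3]
          ring
  -- step 2: substitution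
  have step2 : ∫ x in Ioi (0 : ℝ), (|α| * x ^ (α - 1)) • g (x ^ α)
      = ∫ t in Ioi (0 : ℝ), g t := integral_comp_rpow_Ioi g hα0.ne'
  -- step 3: the t-integral vanishes
  have hint := integrable_aux hs hbre
  have step3 : ∫ t in Ioi (0 : ℝ), g t = (C / α) *
      (∫ t in Ioi (0 : ℝ), (t : ℂ) ^ ((s : ℂ) - 1) * Complex.exp (-b * t)).im := by
    have h4 := integral_im (μ := volume.restrict (Ioi 0)) hint
    simp only [RCLike.im_to_complex] at h4
    rw [hg_def, integral_const_mul, ← h4]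
    congr 1
    refine setIntegral_congr_fun measurableSet_Ioi (fun t ht => ?_)
    rw [mem_Ioi] at ht
    have hcast : ((s : ℂ) - 1) = ((s - 1 : ℝ) : ℂ) := by push_cast; ring
    rw [hcast, ← Complex.ofReal_cpow ht.le]
    have hz : -b * (t : ℂ) = ((-(2 * β) * t : ℝ) : ℂ) + ((c * t : ℝ) : ℂ) * I := by
      rw [hb_def]; push_cast; ring
    rw [hz]
    simp [Complex.exp_im, Complex.exp_re, Complex.mul_im, Complex.add_im, Complex.add_re]
    ring
  rw [step1, step2, step3, key hs hbre]
  have := gamma_cpow_im_zero hα0 hα hβ k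
  rw [← hc_def, ← hs_def, ← hb_def] at this
  rw [this, mul_zero]
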